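/- Let P_(·) be an irreducible and aperiodic G-stochastic function defined on A with gcd(A) = 1. Then there exists n_0 ∈ ℕ_+ such that for every pair of states i, j ∈ G there is a word 𝐛 with depth s(𝐛) = n_0 and P_𝐛(i,j) > 0. -/

import Mathlib

open MeasureTheory
open scoped BigOperators

/-- The matrix of a word `𝐚 = (a_1, …, a_n)` (encoded as a list `[a_1, …, a_n]`),
namely `P_𝐚 = P_(a_n) ⋯ P_(a_1)`, so that `wordK P l i j` is the `(i,j)` entry. -/
noncomputable def wordK {G : Type*} [Fintype G] [DecidableEq G]
    (P : ℕ → G → G → ℝ) : List ℕ → G → G → ℝ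
  | [] => fun i j => if i = j then 1 else 0
  | a :: l => fun i j => ∑ m, wordK P l i m * P a m j

/-- A word over the alphabet `A`: a nonempty finite tuple with entries in `A`. -/
def IsWord (A : Set ℕ) (l : List ℕ) : Prop := l ≠ [] ∧ ∀ a ∈ l, a ∈ A

/-- `i` communicates with `j` if `P_𝐚(i,j) > 0` for some word `𝐚`. -/
def Communicates {G : Type*} [Fintype G] [DecidableEq G]
    (A : Set ℕ) (P : ℕ → G → G → ℝ) (i j : G) : Prop :=
  ∃ l : List ℕ, IsWord A l ∧ 0 < wordK P l i j

/-- `i` and `j` intercommunicate (every state intercommunicates with itself). -/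
def Intercommunicates {G : Type*} [Fintype G] [DecidableEq G]
    (A : Set ℕ) (P : ℕ → G → G → ℝ) (i j : G) : Prop :=
  i = j ∨ (Communicates A P i j ∧ Communicates A P j i)

/-- An intercommunicating class: an equivalence class of the intercommunication relation. -/
def IsInterClass {G : Type*} [Fintype G] [DecidableEq G]
    (A : Set ℕ) (P : ℕ → G → G → ℝ) (C : Set G) : Prop :=
  ∃ i : G, C = {j | Intercommunicates A P i j}

/-- A set `C` is closed if whenever `i ∈ C` communicates with `j`, then `j ∈ C`. -/
def IsClosedClass {G : Type*} [Fintype G] [DecidableEq G]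
    (A : Set ℕ) (P : ℕ → G → G → ℝ) (C : Set G) : Prop :=
  ∀ i ∈ C, ∀ j : G, Communicates A P i j → j ∈ C

/-- `d` is the greatest common divisor of the set `S ⊆ ℕ`. -/
def IsGCDOfSet (S : Set ℕ) (d : ℕ) : Prop :=
  (∀ n ∈ S, d ∣ n) ∧ ∀ e : ℕ, (∀ n ∈ S, e ∣ n) → e ∣ d

/-- The set of depths `s(𝐚)` of words `𝐚` with `P_𝐚(i,i) > 0`. -/
def ReturnDepths {G : Type*} [Fintype G] [DecidableEq G]
    (A : Set ℕ) (P : ℕ → G → G → ℝ) (i : G) : Set ℕ :=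
  {s | ∃ l : List ℕ, IsWord A l ∧ 0 < wordK P l i i ∧ l.sum = s}

/-- `E` is measurable with respect to the coordinates `(x_m)_{m < n}`. -/
def PastMeasurable {G : Type*} [MeasurableSpace G] (n : ℤ) (E : Set (ℤ → G)) : Prop :=
  MeasurableSet[MeasurableSpace.comap
    (fun x : ℤ → G => fun m : {m : ℤ // m < n} => x m.1) MeasurableSpace.pi] E

/-- `μ` is compatible with the imitation kernel
`p(g | w_{-1}, w_{-2}, …) = ∑_{k ∈ A} θ_k P_(k)(w_{-k}, g)` (here `θ` vanishes off `A`). -/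
def Compatible {G : Type*} [MeasurableSpace G] (θ : ℕ → ℝ) (P : ℕ → G → G → ℝ)
    (μ : Measure (ℤ → G)) : Prop :=
  ∀ (n : ℤ) (g : G) (E : Set (ℤ → G)), PastMeasurable n E →
    (μ (E ∩ {x | x n = g})).toReal
      = ∫ x in E, (∑' k : ℕ, θ k * P k (x (n - (k : ℤ))) g) ∂μ

lemma wordK_nonneg {G : Type*} [Fintype G] [DecidableEq G]
    (P : ℕ → G → G → ℝ) (l : List ℕ) (hl : ∀ a ∈ l, ∀ i j : G, 0 ≤ P a i j)
    (i j : G) : 0 ≤ wordK P l i j := by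
  induction l generalizing i j with
  | nil => simp [wordK]; positivity
  | cons a l ih =>
    simp only [wordK]
    refine Finset.sum_nonneg fun m _ => mul_nonneg (ih (fun a ha => hl a (List.mem_cons_of_mem _ ha)) i m) (hl a List.mem_cons_self m j)

lemma wordK_append {G : Type*} [Fintype G] [DecidableEq G]
    (P : ℕ → G → G → ℝ) (l₁ l₂ : List ℕ) (i j : G) :
    wordK P (l₁ ++ l₂) i j = ∑ m, wordK P l₂ i m * wordK P l₁ m j := by
  induction l₁ generalizing j with
  | nil => simp [wordK]
  | cons a l ih =>
    simp only [List.cons_append, wordK]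
    simp only [List.append_eq, ih, Finset.sum_mul]
    rw [Finset.sum_comm]
    refine Finset.sum_congr rfl fun m _ => ?_
    rw [Finset.mul_sum]
    refine Finset.sum_congr rfl fun k _ => ?_
    ring

lemma exists_threshold (S : Set ℕ) (hadd : ∀ x ∈ S, ∀ y ∈ S, x + y ∈ S)
    (hgcd : IsGCDOfSet S 1) : ∃ N : ℕ, 0 < N ∧ ∀ n ≥ N, n ∈ S := by
  have hadd' : ∀ x, (x ∈ S ∨ x = 0) → ∀ y, (y ∈ S ∨ y = 0) → (x + y ∈ S ∨ x + y = 0) := by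
    rintro x (hx | rfl) y (hy | rfl)
    · exact Or.inl (hadd x hx y hy)
    · simpa using Or.inl hx
    · simpa using Or.inl hy
    · simp
  have hmul : ∀ (k x : ℕ), x ∈ S → (k * x ∈ S ∨ k * x = 0) := by
    intro k x hx
    induction k with
    | zero => simp
    | succ k ih =>
      have := hadd' _ ih x (Or.inl hx)
      simpa [Nat.succ_mul] using this
  set T : AddSubgroup ℤ := AddSubgroup.closure ((Nat.cast : ℕ → ℤ) '' S) with hT
  obtain ⟨g, hg⟩ := Int.subgroup_cyclic T
  have hdvd : ∀ n ∈ S, g.natAbs ∣ n := by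
    intro n hn
    have : (n : ℤ) ∈ T := AddSubgroup.subset_closure ⟨n, hn, rfl⟩
    rw [hg, AddSubgroup.mem_closure_singleton] at this
    obtain ⟨k, hk⟩ := this
    have : g ∣ (n : ℤ) := ⟨k, by rw [← hk, smul_eq_mul, mul_comm]⟩
    exact Int.natAbs_dvd_natAbs.mpr (by simpa using this)
  have hg1 : g.natAbs = 1 := Nat.dvd_one.mp (hgcd.2 _ hdvd)
  have hone : (1 : ℤ) ∈ T := by
    rw [hg]
    rcases Int.natAbs_eq_iff.mp hg1 with rfl | rfl
    · exact AddSubgroup.subset_closure rfl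
    · simpa using AddSubgroup.neg_mem _ (AddSubgroup.subset_closure (by simp))
  have hdiff : ∀ (z : ℤ) (_ : z ∈ T), ∃ a b : ℕ,
      (a ∈ S ∨ a = 0) ∧ (b ∈ S ∨ b = 0) ∧ z = (a : ℤ) - b := by
    intro z hz
    induction hz using AddSubgroup.closure_induction with
    | mem x hx =>
      obtain ⟨n, hn, rfl⟩ := hx
      exact ⟨n, 0, Or.inl hn, Or.inr rfl, by simp⟩
    | zero => exact ⟨0, 0, Or.inr rfl, Or.inr rfl, by simp⟩
    | add x y hx hy ihx ihy =>
      obtain ⟨a, b, ha, hb, rfl⟩ := ihx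
      obtain ⟨c, d, hc, hd, rfl⟩ := ihy
      exact ⟨a + c, b + d, hadd' _ ha _ hc, hadd' _ hb _ hd, by push_cast; ring⟩
    | neg x hx ihx =>
      obtain ⟨a, b, ha, hb, rfl⟩ := ihx
      exact ⟨b, a, hb, ha, by ring⟩
  obtain ⟨a, b, ha, hb, hab⟩ := hdiff 1 hone
  have hab' : a = b + 1 := by omega
  subst hab'
  have hb1 : b + 1 ∈ S := ha.resolve_right (by omega)
  refine ⟨b * b + 1, Nat.succ_pos _, fun n hn => ?_⟩
  by_cases hb0 : b = 0
  · subst hb0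
    have h1 : 1 ∈ S := by simpa using hb1
    rcases hmul n 1 h1 with h | h
    · simpa using h
    · omega
  · have hbS : b ∈ S := hb.resolve_right hb0
    set q := n / b with hqdef
    set r := n % b with hrdef
    have hr : r < b := Nat.mod_lt _ (by omega)
    have hqb : b * q + r = n := Nat.div_add_mod n b
    have hq : b ≤ q := by nlinarith
    obtain ⟨m, hm⟩ : ∃ m, q = r + m := ⟨q - r, by omega⟩
    have hm1 : 1 ≤ m := by omega
    have key : m * b + r * (b + 1) = n := by rw [← hqb, hm]; ring
    rcases hmul m b hbS with h1 | h1
    · rcases hmul r (b + 1) hb1 with h2 | h2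
      · rcases hadd' _ (Or.inl h1) _ (Or.inl h2) with h | h
        · rwa [key] at h
        · omega
      · have : m * b = n := by omega
        rwa [this] at h1
    · exact absurd (Nat.mul_eq_zero.mp h1) (by omega)

/-- for an irreducible aperiodic `G`-stochastic function with
`gcd(A) = 1`, there is a common depth `n_0` connecting every pair of states. -/
theorem stmt_14 {G : Type*} [Fintype G] [DecidableEq G] [Nonempty G]
    (A : Set ℕ) (hA : A.Nonempty) (hApos : ∀ k ∈ A, 0 < k)
    (P : ℕ → G → G → ℝ)
    (hPnn : ∀ k ∈ A, ∀ i j : G, 0 ≤ P k i j)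
    (hProw : ∀ k ∈ A, ∀ i : G, ∑ j, P k i j = 1)
    (hirr : ∀ i j : G, Communicates A P i j)
    (hgcdA : IsGCDOfSet A 1)
    (haper : ∀ i : G, IsGCDOfSet (ReturnDepths A P i) 1) :
    ∃ n₀ : ℕ, 0 < n₀ ∧ ∀ i j : G,
      ∃ l : List ℕ, IsWord A l ∧ l.sum = n₀ ∧ 0 < wordK P l i j := by

  classical
  -- each ReturnDepths set is closed under addition
  have hRDadd : ∀ i : G, ∀ x ∈ ReturnDepths A P i, ∀ y ∈ ReturnDepths A P i,
      x + y ∈ ReturnDepths A P i := by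
    rintro i x ⟨l₁, ⟨hl₁ne, hl₁A⟩, hl₁pos, rfl⟩ y ⟨l₂, ⟨hl₂ne, hl₂A⟩, hl₂pos, rfl⟩
    refine ⟨l₁ ++ l₂, ⟨by simp [hl₁ne], fun a ha => ?_⟩, ?_, by simp⟩
    · rcases List.mem_append.mp ha with h | h
      · exact hl₁A a h
      · exact hl₂A a h
    · rw [wordK_append]
      refine Finset.sum_pos' (fun m _ => mul_nonneg ?_ ?_) ⟨i, Finset.mem_univ i, ?_⟩
      · exact wordK_nonneg P l₂ (fun a ha => hPnn a (hl₂A a ha)) i m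
      · exact wordK_nonneg P l₁ (fun a ha => hPnn a (hl₁A a ha)) m i
      · exact mul_pos hl₂pos hl₁pos
  -- thresholds for each state
  choose N hNpos hN using fun i : G => exists_threshold (ReturnDepths A P i) (hRDadd i) (haper i)
  -- connecting words for each pair
  choose w hwword hwpos using fun i j : G => hirr i j
  set K : ℕ := Finset.univ.sup (fun p : G × G => (w p.1 p.2).sum) with hK
  set M : ℕ := Finset.univ.sup N with hM
  refine ⟨K + M + 1, by omega, fun i j => ?_⟩
  set l := w i j with hl
  have hsum_le : l.sum ≤ K := Finset.le_sup (f := fun p : G × G => (w p.1 p.2).sum)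
    (Finset.mem_univ (i, j))
  have hNi : N i ≤ M := Finset.le_sup (Finset.mem_univ i)
  set d := K + M + 1 - l.sum with hd
  have hdN : d ≥ N i := by omega
  obtain ⟨r, ⟨hrne, hrA⟩, hrpos, hrsum⟩ := hN i d hdN
  refine ⟨l ++ r, ⟨by simp [(hwword i j).1, hrne], fun a ha => ?_⟩, ?_, ?_⟩
  · rcases List.mem_append.mp ha with h | h
    · exact (hwword i j).2 a h
    · exact hrA a h
  · simp only [List.sum_append, hrsum]
    omega
  · rw [wordK_append]
    refine Finset.sum_pos' (fun m _ => mul_nonneg ?_ ?_) ⟨i, Finset.mem_univ i, ?_⟩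
    · exact wordK_nonneg P r (fun a ha => hPnn a (hrA a ha)) i m
    · exact wordK_nonneg P l (fun a ha => hPnn a ((hwword i j).2 a ha)) m j
    · exact mul_pos hrpos (hwpos i j)
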